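/- Under Assumptions A, suppose h : [0,T] → H is continuously differentiable with values in B(f, ρ), and u : [0,T] → H is a continuous function with u(t) ∈ B(y, R) and F(u(t)) = h(t) for all t ∈ [0,T]. Then u is continuously differentiable on [0,T] and its derivative satisfies F'(u(t))(u'(t)) = h'(t) for all t ∈ [0,T] (one-sided derivatives at the endpoints). -/

import Mathlib

open Metric Set Filter Asymptotics Topology

set_option maxHeartbeats 1000000 in
theorem stmt_4
    {H : Type*} [NormedAddCommGroup H] [InnerProductSpace ℝ H] [CompleteSpace H]
    (F : H → H) (F' : H → H →L[ℝ] H) (y f : H) (R m q : ℝ)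
    (hf : F y = f) (hR : 0 < R)
    (hdiff : ∀ u ∈ closedBall y R, HasFDerivAt F (F' u) u)
    (Q : H →L[ℝ] H)
    (hQl : Q.comp (F' y) = ContinuousLinearMap.id ℝ H)
    (hQr : (F' y).comp Q = ContinuousLinearMap.id ℝ H)
    (hm : 0 < m) (hQm : ‖Q‖ ≤ m)
    (ω : ℝ → ℝ)
    (hωcont : ContinuousOn ω (Icc 0 (2 * R)))
    (hωmono : StrictMonoOn ω (Icc 0 (2 * R)))
    (hω0 : ω 0 = 0)
    (hωF : ∀ u ∈ closedBall y R, ∀ v ∈ closedBall y R, ‖F' u - F' v‖ ≤ ω ‖u - v‖)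
    (hq : m * ω R = q) (hq0 : 0 < q) (hq1 : q < 1)
    (ρ : ℝ) (hρ : ρ = (1 - q) * R / m)
    (T : ℝ) (hT : 0 < T) (h h' : ℝ → H)
    (hhderiv : ∀ t ∈ Icc (0:ℝ) T, HasDerivWithinAt h (h' t) (Icc 0 T) t)
    (hh'cont : ContinuousOn h' (Icc 0 T))
    (hhball : ∀ t ∈ Icc (0:ℝ) T, h t ∈ closedBall f ρ)
    (u : ℝ → H) (hucont : ContinuousOn u (Icc 0 T))
    (huball : ∀ t ∈ Icc (0:ℝ) T, u t ∈ closedBall y R)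
    (huF : ∀ t ∈ Icc (0:ℝ) T, F (u t) = h t) :
    ∃ u' : ℝ → H, ContinuousOn u' (Icc 0 T) ∧
      ∀ t ∈ Icc (0:ℝ) T, HasDerivWithinAt u (u' t) (Icc 0 T) t ∧ F' (u t) (u' t) = h' t := by
  have hm0 : (0:ℝ) ≤ m := hm.le
  have h2R : (0:ℝ) ≤ 2 * R := by linarith
  have h0mem : (0:ℝ) ∈ Icc 0 (2*R) := ⟨le_rfl, h2R⟩
  have hRmem : R ∈ Icc 0 (2*R) := ⟨hR.le, by linarith⟩
  have hymem : y ∈ closedBall y R := mem_closedBall_self hR.le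
  have hball_norm : ∀ x ∈ closedBall y R, ‖x - y‖ ≤ R := by
    intro x hx; rw [← dist_eq_norm]; exact mem_closedBall.1 hx
  have hdmem : ∀ x ∈ closedBall y R, ∀ x' ∈ closedBall y R, ‖x - x'‖ ∈ Icc 0 (2*R) := by
    intro x hx x' hx'
    refine ⟨norm_nonneg _, ?_⟩
    have h1 := hball_norm x hx
    have h2 := hball_norm x' hx'
    have heq : x - x' = (x - y) - (x' - y) := by abel
    calc ‖x - x'‖ = ‖(x - y) - (x' - y)‖ := by rw [← heq]
      _ ≤ ‖x - y‖ + ‖x' - y‖ := norm_sub_le _ _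
      _ ≤ 2 * R := by linarith
  have hmono := hωmono.monotoneOn
  have hkey : ∀ x ∈ closedBall y R, ‖F' x - F' y‖ ≤ ω R := by
    intro x hx
    refine (hωF x hx y hymem).trans ?_
    exact hmono (hdmem x hx y hymem) hRmem (hball_norm x hx)
  have hQ1 : Q * F' y = 1 := hQl
  have hQ1' : F' y * Q = 1 := hQr
  -- every derivative on the ball is invertible
  have hunit : ∀ x ∈ closedBall y R, IsUnit (F' x) := by
    intro x hx
    have hsq : ‖Q * (F' x - F' y)‖ ≤ q := by
      calc ‖Q * (F' x - F' y)‖ ≤ ‖Q‖ * ‖F' x - F' y‖ :=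
            ContinuousLinearMap.opNorm_comp_le _ _
        _ ≤ m * ω R := mul_le_mul hQm (hkey x hx) (norm_nonneg _) hm0
        _ = q := hq
    have hsq' : ‖(F' x - F' y) * Q‖ ≤ q := by
      calc ‖(F' x - F' y) * Q‖ ≤ ‖F' x - F' y‖ * ‖Q‖ :=
            ContinuousLinearMap.opNorm_comp_le _ _
        _ ≤ ω R * m := mul_le_mul (hkey x hx) hQm (norm_nonneg _)
            (le_trans (norm_nonneg _) ((hkey x hx)))
        _ = q := by rw [mul_comm]; exact hq
    have hs1 : ‖-(Q * (F' x - F' y))‖ < 1 := by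
      rw [norm_neg]; exact lt_of_le_of_lt hsq hq1
    have hs1' : ‖-((F' x - F' y) * Q)‖ < 1 := by
      rw [norm_neg]; exact lt_of_le_of_lt hsq' hq1
    have hUL : IsUnit (Q * F' x) := by
      have heq : Q * F' x = 1 - -(Q * (F' x - F' y)) := by
        rw [sub_neg_eq_add, mul_sub, hQ1]; abel
      rw [heq]; exact ⟨Units.oneSub _ hs1, rfl⟩
    have hUR : IsUnit (F' x * Q) := by
      have heq : F' x * Q = 1 - -((F' x - F' y) * Q) := by
        rw [sub_neg_eq_add, sub_mul, hQ1']; abel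
      rw [heq]; exact ⟨Units.oneSub _ hs1', rfl⟩
    obtain ⟨eL, heL⟩ := hUL
    obtain ⟨eR, heR⟩ := hUR
    have hb : ((eL⁻¹ : (H →L[ℝ] H)ˣ) : H →L[ℝ] H) * Q * F' x = 1 := by
      rw [mul_assoc, ← heL, Units.inv_mul]
    have hc : F' x * (Q * ((eR⁻¹ : (H →L[ℝ] H)ˣ) : H →L[ℝ] H)) = 1 := by
      rw [← mul_assoc, ← heR, Units.mul_inv]
    have hbc : ((eL⁻¹ : (H →L[ℝ] H)ˣ) : H →L[ℝ] H) * Q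
        = Q * ((eR⁻¹ : (H →L[ℝ] H)ˣ) : H →L[ℝ] H) := by
      calc ((eL⁻¹ : (H →L[ℝ] H)ˣ) : H →L[ℝ] H) * Q
          = (((eL⁻¹ : (H →L[ℝ] H)ˣ) : H →L[ℝ] H) * Q)
            * (F' x * (Q * ((eR⁻¹ : (H →L[ℝ] H)ˣ) : H →L[ℝ] H))) := by rw [hc, mul_one]
        _ = (((eL⁻¹ : (H →L[ℝ] H)ˣ) : H →L[ℝ] H) * Q * F' x)
            * (Q * ((eR⁻¹ : (H →L[ℝ] H)ˣ) : H →L[ℝ] H)) := by simp only [mul_assoc]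
        _ = Q * ((eR⁻¹ : (H →L[ℝ] H)ˣ) : H →L[ℝ] H) := by rw [hb, one_mul]
    exact ⟨⟨F' x, Q * ((eR⁻¹ : (H →L[ℝ] H)ˣ) : H →L[ℝ] H), hc, by rw [← hbc]; exact hb⟩, rfl⟩
  have hBAapp : ∀ x ∈ closedBall y R, ∀ z, Ring.inverse (F' x) (F' x z) = z := by
    intro x hx z
    rw [← ContinuousLinearMap.mul_apply, Ring.inverse_mul_cancel _ (hunit x hx),
      ContinuousLinearMap.one_apply]
  have hABapp : ∀ x ∈ closedBall y R, ∀ z, F' x (Ring.inverse (F' x) z) = z := by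
    intro x hx z
    rw [← ContinuousLinearMap.mul_apply, Ring.mul_inverse_cancel _ (hunit x hx),
      ContinuousLinearMap.one_apply]
  -- continuity of F' on the ball
  have hF'cont : ContinuousOn F' (closedBall y R) := by
    intro x hx
    rw [ContinuousWithinAt, Metric.tendsto_nhdsWithin_nhds]
    intro ε hε
    have h3 : Tendsto ω (𝓝[Icc 0 (2*R)] 0) (𝓝 (ω 0)) := hωcont 0 h0mem
    rw [Metric.tendsto_nhdsWithin_nhds] at h3
    obtain ⟨δ, hδ0, hδ⟩ := h3 ε hε
    refine ⟨δ, hδ0, ?_⟩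
    intro x' hx' hd
    have hdm := hdmem x' hx' x hx
    have hdd : dist ‖x' - x‖ 0 < δ := by
      rw [Real.dist_eq, sub_zero, abs_of_nonneg (norm_nonneg _), ← dist_eq_norm]
      exact hd
    have := hδ hdm hdd
    rw [Real.dist_eq, hω0, sub_zero] at this
    calc dist (F' x') (F' x) = ‖F' x' - F' x‖ := dist_eq_norm _ _
      _ ≤ ω ‖x' - x‖ := hωF x' hx' x hx
      _ ≤ |ω ‖x' - x‖| := le_abs_self _
      _ < ε := this
  -- definition of u'
  set u' : ℝ → H := fun t => Ring.inverse (F' (u t)) (h' t) with hu'def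
  have hFu : ContinuousOn (fun t => F' (u t)) (Icc 0 T) :=
    hF'cont.comp hucont (fun s hs => huball s hs)
  have hWcont : ContinuousOn (fun t => Ring.inverse (F' (u t))) (Icc 0 T) := by
    intro t ht
    have hu := hunit _ (huball t ht)
    have hca : ContinuousAt Ring.inverse (F' (u t)) := by
      have := NormedRing.inverse_continuousAt hu.unit
      rwa [IsUnit.unit_spec] at this
    exact Filter.Tendsto.comp hca (hFu t ht)
  have hu'cont : ContinuousOn u' (Icc 0 T) := hWcont.clm_apply hh'cont
  -- mean value estimate
  have hmvt : ∀ t ∈ Icc (0:ℝ) T, ∀ s ∈ Icc (0:ℝ) T,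
      ‖h s - h t - (F' (u t)) (u s - u t)‖ ≤ ω ‖u s - u t‖ * ‖u s - u t‖ := by
    intro t ht s hs
    set A := F' (u t) with hA
    have hseg : segment ℝ (u t) (u s) ⊆ closedBall y R :=
      (convex_closedBall y R).segment_subset (huball t ht) (huball s hs)
    have hbound : ∀ x ∈ segment ℝ (u t) (u s), ‖F' x - A‖ ≤ ω ‖u s - u t‖ := by
      intro x hxseg
      have hx := hseg hxseg
      refine (hωF x hx (u t) (huball t ht)).trans ?_
      obtain ⟨a, b, ha, hb, hab, hx'⟩ := hxseg
      have heq : x - u t = b • (u s - u t) := by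
        rw [← hx']
        have ha' : a = 1 - b := by linarith
        rw [smul_sub, ha', sub_smul, one_smul]; abel
      have hle : ‖x - u t‖ ≤ ‖u s - u t‖ := by
        rw [heq, norm_smul, Real.norm_eq_abs, abs_of_nonneg hb]
        nlinarith [norm_nonneg (u s - u t)]
      exact hmono (hdmem x hx (u t) (huball t ht))
        (hdmem (u s) (huball s hs) (u t) (huball t ht)) hle
    have hder : ∀ x ∈ segment ℝ (u t) (u s),
        HasFDerivWithinAt (fun w => F w - A w) (F' x - A) (segment ℝ (u t) (u s)) x :=
      fun x hx => ((hdiff x (hseg hx)).sub A.hasFDerivAt).hasFDerivWithinAt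
    have hres := Convex.norm_image_sub_le_of_norm_hasFDerivWithin_le hder hbound
      (convex_segment _ _) (left_mem_segment ℝ _ _) (right_mem_segment ℝ _ _)
    have heq2 : h s - h t - A (u s - u t) = (F (u s) - A (u s)) - (F (u t) - A (u t)) := by
      rw [← huF s hs, ← huF t ht, map_sub]; abel
    rw [heq2]; exact hres
  refine ⟨u', hu'cont, ?_⟩
  intro t ht
  have hut := huball t ht
  obtain ⟨A, hA⟩ : ∃ A : H →L[ℝ] H, A = F' (u t) := ⟨_, rfl⟩
  obtain ⟨B, hB⟩ : ∃ B : H →L[ℝ] H, B = Ring.inverse (F' (u t)) := ⟨_, rfl⟩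
  have hBA : ∀ z, B (A z) = z := by rw [hA, hB]; exact hBAapp _ hut
  have hAB : ∀ z, A (B z) = z := by rw [hA, hB]; exact hABapp _ hut
  have hu't : u' t = B (h' t) := by rw [hB]
  have hmvt' : ∀ s ∈ Icc (0:ℝ) T,
      ‖h s - h t - A (u s - u t)‖ ≤ ω ‖u s - u t‖ * ‖u s - u t‖ := by
    intro s hs; rw [hA]; exact hmvt t ht s hs
  constructor
  · rw [hasDerivWithinAt_iff_isLittleO]
    simp only [hu't]
    set l := 𝓝[Icc (0:ℝ) T] t with hl
    have hIcc : ∀ᶠ s in l, s ∈ Icc (0:ℝ) T := eventually_mem_nhdsWithin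
    have he1 : (fun s => h s - h t - (s - t) • h' t) =o[l] fun s => s - t :=
      hasDerivWithinAt_iff_isLittleO.1 (hhderiv t ht)
    have hbigO : (fun s => h s - h t) =O[l] fun s => s - t := by
      have heq : (fun s => h s - h t)
          = fun s => (h s - h t - (s - t) • h' t) + (s - t) • h' t := by
        funext s; abel
      rw [heq]
      refine he1.isBigO.add ?_
      refine isBigO_iff.2 ⟨‖h' t‖, Eventually.of_forall fun s => ?_⟩
      rw [norm_smul, mul_comm]
    obtain ⟨c0, hc0⟩ := hbigO.bound
    set c1 := max c0 0 with hc1def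
    have hc1nn : 0 ≤ c1 := le_max_right _ _
    have hc1 : ∀ᶠ s in l, ‖h s - h t‖ ≤ c1 * ‖s - t‖ :=
      hc0.mono fun s hs => hs.trans
        (mul_le_mul_of_nonneg_right (le_max_left _ _) (norm_nonneg _))
    have hδ : Tendsto (fun s => ‖u s - u t‖) l (𝓝 0) := by
      have h1 : Tendsto (fun s => u s - u t) l (𝓝 (u t - u t)) :=
        (hucont t ht).sub tendsto_const_nhds
      rw [sub_self] at h1
      simpa using h1.norm
    have hωδ : Tendsto (fun s => ω ‖u s - u t‖) l (𝓝 0) := by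
      have hmem : ∀ᶠ s in l, ‖u s - u t‖ ∈ Icc 0 (2*R) :=
        hIcc.mono fun s hs => hdmem _ (huball s hs) _ hut
      have h2 : Tendsto (fun s => ‖u s - u t‖) l (𝓝[Icc 0 (2*R)] 0) :=
        tendsto_nhdsWithin_iff.2 ⟨hδ, hmem⟩
      have h3 : Tendsto ω (𝓝[Icc 0 (2*R)] 0) (𝓝 (ω 0)) := hωcont 0 h0mem
      rw [hω0] at h3
      exact h3.comp h2
    have hhalf : ∀ᶠ s in l, ‖B‖ * ω ‖u s - u t‖ ≤ 1/2 := by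
      have h4 := hωδ.const_mul ‖B‖
      rw [mul_zero] at h4
      exact h4.eventually (eventually_le_nhds (by norm_num))
    have hlip : ∀ᶠ s in l, ‖u s - u t‖ ≤ (2 * ‖B‖ * c1) * ‖s - t‖ := by
      filter_upwards [hIcc, hhalf, hc1] with s hs hhalf' hc1'
      have hAn : ‖A (u s - u t)‖ ≤ ‖h s - h t‖ + ω ‖u s - u t‖ * ‖u s - u t‖ := by
        have := hmvt' s hs
        calc ‖A (u s - u t)‖ = ‖(h s - h t) - (h s - h t - A (u s - u t))‖ := by
              congr 1; abel
          _ ≤ ‖h s - h t‖ + ‖h s - h t - A (u s - u t)‖ := norm_sub_le _ _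
          _ ≤ ‖h s - h t‖ + ω ‖u s - u t‖ * ‖u s - u t‖ := by linarith
      have h2 : ‖u s - u t‖ ≤ ‖B‖ * ‖A (u s - u t)‖ := by
        conv_lhs => rw [← hBA (u s - u t)]
        exact B.le_opNorm _
      have e3 : ‖B‖ * ‖A (u s - u t)‖
          ≤ ‖B‖ * ‖h s - h t‖ + (‖B‖ * ω ‖u s - u t‖) * ‖u s - u t‖ := by
        nlinarith [mul_le_mul_of_nonneg_left hAn (norm_nonneg B)]
      have e4 : (‖B‖ * ω ‖u s - u t‖) * ‖u s - u t‖ ≤ (1/2) * ‖u s - u t‖ :=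
        mul_le_mul_of_nonneg_right hhalf' (norm_nonneg _)
      have e5 : ‖B‖ * ‖h s - h t‖ ≤ ‖B‖ * (c1 * ‖s - t‖) :=
        mul_le_mul_of_nonneg_left hc1' (norm_nonneg _)
      nlinarith [h2, e3, e4, e5]
    set K := 2 * ‖B‖ * c1 + 1 with hKdef
    have hK : 0 < K := by positivity
    have he2 : (fun s => h s - h t - A (u s - u t)) =o[l] fun s => s - t := by
      rw [isLittleO_iff]
      intro c hc
      have hcK : 0 < c / K := div_pos hc hK
      have hωsmall : ∀ᶠ s in l, ω ‖u s - u t‖ ≤ c / K :=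
        hωδ.eventually (eventually_le_nhds hcK)
      filter_upwards [hIcc, hlip, hωsmall] with s hs hl' hω'
      have hδK : ‖u s - u t‖ ≤ K * ‖s - t‖ := by
        refine hl'.trans ?_
        have hnn : (0:ℝ) ≤ ‖s - t‖ := norm_nonneg _
        nlinarith
      calc ‖h s - h t - A (u s - u t)‖
          ≤ ω ‖u s - u t‖ * ‖u s - u t‖ := hmvt' s hs
        _ ≤ (c/K) * (K * ‖s - t‖) :=
            mul_le_mul hω' hδK (norm_nonneg _) hcK.le
        _ = c * ‖s - t‖ := by field_simp
    have hfin : (fun s => B ((h s - h t - (s - t) • h' t) - (h s - h t - A (u s - u t))))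
        =o[l] fun s => s - t :=
      (B.isBigO_comp _ _).trans_isLittleO (he1.sub he2)
    refine hfin.congr' (Eventually.of_forall fun s => ?_) EventuallyEq.rfl
    have heq : (h s - h t - (s - t) • h' t) - (h s - h t - A (u s - u t))
        = A (u s - u t) - (s - t) • h' t := by abel
    show B ((h s - h t - (s - t) • h' t) - (h s - h t - A (u s - u t)))
        = u s - u t - (s - t) • B (h' t)
    rw [heq, map_sub, hBA, map_smul]
  · rw [hu't, ← hA]; exact hAB (h' t)
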